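/- arXiv:1511.05463 — 2 statements merged into one kernel-verified Lean document; each statement's English description precedes it below -/
import Mathlib

section
/- For any positive integer d and any ε ∈ (0,1), there exists an ε-net of the unit sphere of ℝ^d (with respect to the Euclidean norm) of cardinality at most 2d(1+2/ε)^{d−1}. -/
open Real

/-- The Euclidean norm of a vector in `k → ℝ`. -/
noncomputable def euclNorm {k : Type*} [Fintype k] (v : k → ℝ) : ℝ :=
  Real.sqrt (∑ i, v i ^ 2)

/-- `N` is an `ε`-net of the unit sphere of `ℝ^k`: a finite subset of the sphere such that
every point of the sphere is within Euclidean distance `ε` of some point of `N`. -/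
def IsSphereNet {k : Type*} [Fintype k] (ε : ℝ) (N : Finset (k → ℝ)) : Prop :=
  (∀ x ∈ N, euclNorm x = 1) ∧
    ∀ x : k → ℝ, euclNorm x = 1 → ∃ y ∈ N, euclNorm (x - y) ≤ ε

open MeasureTheory Metric in
/-- Volumetric bound on separated sets on the sphere. -/
lemma sep_card_bound (d : ℕ) (hd : 0 < d) (ε : ℝ) (hε0 : 0 < ε)
    (N : Finset (EuclideanSpace ℝ (Fin d)))
    (hN1 : ∀ x ∈ N, ‖x‖ = 1)
    (hsep : ∀ x ∈ N, ∀ y ∈ N, x ≠ y → ε < dist x y) :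
    (N.card : ℝ) * (ε / 2) ^ d + 2 ≤ 2 * (1 + ε / 2) ^ d := by
  haveI : Nontrivial (EuclideanSpace ℝ (Fin d)) := by
    refine ⟨EuclideanSpace.single ⟨0, hd⟩ 1, 0, fun h => ?_⟩
    have := congrArg (fun v => ‖v‖) h
    simp [EuclideanSpace.norm_single] at this
  set r : ℝ := ε / 2 with hr
  have hr0 : 0 < r := by positivity
  set μ : Measure (EuclideanSpace ℝ (Fin d)) := volume with hμ
  set v : ENNReal := μ (ball 0 1) with hv
  have hv0 : v ≠ 0 := (measure_ball_pos μ 0 one_pos).ne'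
  have hvt : v ≠ ⊤ := measure_ball_lt_top.ne
  have hballvol : ∀ (y : EuclideanSpace ℝ (Fin d)) (R : ℝ), 0 ≤ R →
      μ (ball y R) = ENNReal.ofReal (R ^ d) * v := by
    intro y R hR
    rw [hv, Measure.addHaar_ball μ y hR, finrank_euclideanSpace_fin]
  -- the half-ball around each net point
  set H : EuclideanSpace ℝ (Fin d) → Set (EuclideanSpace ℝ (Fin d)) :=
    fun y => ball y r ∩ {z | 0 ≤ (inner ℝ (z - y) y : ℝ)} with hH
  have hmeas : ∀ y, MeasurableSet (H y) := by
    intro y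
    refine measurableSet_ball.inter ?_
    exact measurableSet_le measurable_const
      (((continuous_id.sub continuous_const).inner continuous_const).measurable)
  -- half ball volume
  have hhalf : ∀ y, μ (ball y r) ≤ 2 * μ (H y) := by
    intro y
    have hT : MeasurePreserving (fun z : EuclideanSpace ℝ (Fin d) => (y + y) - z) μ μ :=
      Measure.measurePreserving_sub_left μ (y + y)
    have hsub : ball y r ⊆ H y ∪ (fun z : EuclideanSpace ℝ (Fin d) => (y + y) - z) ⁻¹' (H y) := by
      intro z hz
      by_cases h : 0 ≤ (inner ℝ (z - y) y : ℝ)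
      · exact Or.inl ⟨hz, h⟩
      · refine Or.inr ?_
        have h1 : (y + y - z) - y = -(z - y) := by abel
        constructor
        · rw [mem_ball, dist_eq_norm, h1, norm_neg, ← dist_eq_norm]
          exact mem_ball.mp hz
        · show 0 ≤ (inner ℝ ((y + y - z) - y) y : ℝ)
          rw [h1, inner_neg_left]
          linarith
    calc μ (ball y r)
        ≤ μ (H y ∪ (fun z : EuclideanSpace ℝ (Fin d) => (y + y) - z) ⁻¹' (H y)) :=
          measure_mono hsub
      _ ≤ μ (H y) + μ ((fun z : EuclideanSpace ℝ (Fin d) => (y + y) - z) ⁻¹' (H y)) :=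
          measure_union_le _ _
      _ = μ (H y) + μ (H y) := by rw [hT.measure_preimage (hmeas y).nullMeasurableSet]
      _ = 2 * μ (H y) := by ring
  -- the half-balls sit in the shell
  have hshell : ∀ y ∈ N, H y ⊆ ball 0 (1 + r) \ ball 0 1 := by
    intro y hy z hz
    have hy1 : ‖y‖ = 1 := hN1 y hy
    obtain ⟨hzball, hzin⟩ := hz
    have hzin' : 0 ≤ (inner ℝ (z - y) y : ℝ) := hzin
    have hCS : (inner ℝ z y : ℝ) ≤ ‖z‖ * ‖y‖ := real_inner_le_norm z y
    have hself : (inner ℝ y y : ℝ) = ‖y‖ ^ 2 := real_inner_self_eq_norm_sq y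
    have hsubin : (inner ℝ (z - y) y : ℝ) = inner ℝ z y - inner ℝ y y := inner_sub_left z y y
    have h1z : 1 ≤ ‖z‖ := by
      rw [hy1] at hCS hself
      nlinarith
    constructor
    · rw [mem_ball, dist_zero_right]
      have hle : ‖z‖ ≤ ‖z - y‖ + ‖y‖ := by
        calc ‖z‖ = ‖(z - y) + y‖ := by rw [sub_add_cancel]
          _ ≤ ‖z - y‖ + ‖y‖ := norm_add_le _ _
      have hzy : ‖z - y‖ < r := by rw [← dist_eq_norm]; exact hzball
      rw [hy1] at hle
      linarith
    · rw [mem_ball, dist_zero_right]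
      push_neg
      linarith
  -- disjointness
  have hdisj : (↑N : Set (EuclideanSpace ℝ (Fin d))).PairwiseDisjoint H := by
    intro x hx y hy hxy
    have hd' : r + r ≤ dist x y := by
      have := hsep x hx y hy hxy
      rw [hr]; linarith
    exact Set.disjoint_of_subset Set.inter_subset_left Set.inter_subset_left
      (ball_disjoint_ball hd')
  -- main ENNReal computation
  set c : ENNReal := ENNReal.ofReal (r ^ d) * v with hc
  have key : (N.card : ENNReal) * c + 2 * v ≤ 2 * (ENNReal.ofReal ((1 + r) ^ d) * v) := by
    have h1 : (N.card : ENNReal) * c ≤ 2 * μ (⋃ y ∈ N, H y) := by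
      calc (N.card : ENNReal) * c = ∑ _y ∈ N, c := by rw [Finset.sum_const, nsmul_eq_mul]
        _ ≤ ∑ y ∈ N, 2 * μ (H y) := by
            refine Finset.sum_le_sum fun y _ => ?_
            rw [hc, ← hballvol y r hr0.le]
            exact hhalf y
        _ = 2 * ∑ y ∈ N, μ (H y) := by rw [Finset.mul_sum]
        _ = 2 * μ (⋃ y ∈ N, H y) := by
            rw [measure_biUnion_finset hdisj fun y _ => hmeas y]
    have h2 : μ (⋃ y ∈ N, H y) + v ≤ μ (ball 0 (1 + r)) := by
      have hsub1 : (⋃ y ∈ N, H y) ⊆ ball 0 (1 + r) \ ball 0 1 := by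
        intro z hz
        simp only [Set.mem_iUnion] at hz
        obtain ⟨y, hy, hzy⟩ := hz
        exact hshell y hy hzy
      calc μ (⋃ y ∈ N, H y) + v ≤ μ (ball 0 (1 + r) \ ball 0 1) + μ (ball 0 1) :=
            add_le_add (measure_mono hsub1) le_rfl
        _ = μ ((ball 0 (1 + r) \ ball 0 1) ∪ ball 0 1) := by
            rw [measure_union Set.disjoint_sdiff_left measurableSet_ball]
        _ = μ (ball 0 (1 + r)) := by
            rw [Set.diff_union_of_subset (ball_subset_ball (by linarith))]
    calc (N.card : ENNReal) * c + 2 * v ≤ 2 * μ (⋃ y ∈ N, H y) + 2 * v :=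
          add_le_add h1 le_rfl
      _ = 2 * (μ (⋃ y ∈ N, H y) + v) := by ring
      _ ≤ 2 * μ (ball 0 (1 + r)) := mul_le_mul_right h2 2
      _ = 2 * (ENNReal.ofReal ((1 + r) ^ d) * v) := by
          rw [hballvol 0 (1 + r) (by linarith)]
  -- cancel v and pass to reals
  have key2 : ((N.card : ENNReal) * ENNReal.ofReal (r ^ d) + 2) * v ≤
      (2 * ENNReal.ofReal ((1 + r) ^ d)) * v := by
    calc ((N.card : ENNReal) * ENNReal.ofReal (r ^ d) + 2) * v
        = (N.card : ENNReal) * c + 2 * v := by rw [hc]; ring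
      _ ≤ 2 * (ENNReal.ofReal ((1 + r) ^ d) * v) := key
      _ = (2 * ENNReal.ofReal ((1 + r) ^ d)) * v := by ring
  have key3 : (N.card : ENNReal) * ENNReal.ofReal (r ^ d) + 2 ≤
      2 * ENNReal.ofReal ((1 + r) ^ d) :=
    (ENNReal.mul_le_mul_iff_left hv0 hvt).mp key2
  have key4 : ENNReal.ofReal ((N.card : ℝ) * r ^ d + 2) ≤
      ENNReal.ofReal (2 * (1 + r) ^ d) := by
    calc ENNReal.ofReal ((N.card : ℝ) * r ^ d + 2)
        = (N.card : ENNReal) * ENNReal.ofReal (r ^ d) + 2 := by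
          rw [ENNReal.ofReal_add (by positivity) (by norm_num),
            ENNReal.ofReal_mul (by positivity), ENNReal.ofReal_natCast,
            ENNReal.ofReal_ofNat]
      _ ≤ 2 * ENNReal.ofReal ((1 + r) ^ d) := key3
      _ = ENNReal.ofReal (2 * (1 + r) ^ d) := by
          rw [ENNReal.ofReal_mul (by norm_num), ENNReal.ofReal_ofNat]
  exact (ENNReal.ofReal_le_ofReal_iff (by positivity)).mp key4

open Metric in
/-- **(Rudelson–Vershynin, Proposition 2.1.)** For any positive integer `d` and any
`ε ∈ (0,1)`, the unit sphere of `ℝ^d` admits an `ε`-net of cardinality at most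
`2d(1 + 2/ε)^(d-1)`. -/
theorem exists_sphere_net (d : ℕ) (hd : 0 < d) (ε : ℝ) (hε : ε ∈ Set.Ioo (0 : ℝ) 1) :
    ∃ N : Finset (Fin d → ℝ), IsSphereNet ε N ∧
      (N.card : ℝ) ≤ 2 * d * (1 + 2 / ε) ^ ((d : ℝ) - 1) := by
  classical
  obtain ⟨hε0, hε1⟩ := hε
  obtain ⟨m, rfl⟩ : ∃ m, d = m + 1 := ⟨d - 1, by omega⟩
  set r : ℝ := ε / 2 with hr
  have hr0 : 0 < r := by positivity
  have hrm : r ^ m ≠ 0 := pow_ne_zero _ hr0.ne'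
  -- the real cardinality bound for separated sets
  have hbound : ∀ N : Finset (EuclideanSpace ℝ (Fin (m + 1))), (∀ x ∈ N, ‖x‖ = 1) →
      (∀ x ∈ N, ∀ y ∈ N, x ≠ y → ε < dist x y) →
      (N.card : ℝ) ≤ 2 * ((m : ℝ) + 1) * (1 + 2 / ε) ^ m := by
    intro N h1 h2
    have hb := sep_card_bound (m + 1) hd ε hε0 N h1 h2
    rw [← hr] at hb
    -- (1+r)^(m+1) - 1 ≤ (m+1) * r * (1+r)^m
    have hfac := geom_sum₂_mul (1 + r) 1 (m + 1)
    simp only [one_pow, mul_one, add_sub_cancel_left] at hfac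
    have hsum : (∑ i ∈ Finset.range (m + 1), (1 + r) ^ i) ≤
        ((m : ℝ) + 1) * (1 + r) ^ m := by
      have h := Finset.sum_le_card_nsmul (Finset.range (m + 1))
        (fun i => (1 + r) ^ i) ((1 + r) ^ m)
        (fun i hi => pow_le_pow_right₀ (by linarith)
          (by have := Finset.mem_range.mp hi; omega))
      rw [Finset.card_range, nsmul_eq_mul] at h
      push_cast at h
      exact h
    have hgeom : (1 + r) ^ (m + 1) - 1 ≤ ((m : ℝ) + 1) * r * (1 + r) ^ m := by
      rw [← hfac]
      calc (∑ i ∈ Finset.range (m + 1), (1 + r) ^ i) * r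
          ≤ (((m : ℝ) + 1) * (1 + r) ^ m) * r :=
            mul_le_mul_of_nonneg_right hsum hr0.le
        _ = ((m : ℝ) + 1) * r * (1 + r) ^ m := by ring
    have hc1 : (N.card : ℝ) * r ^ (m + 1) ≤ 2 * (((m : ℝ) + 1) * r * (1 + r) ^ m) := by
      linarith
    -- rewrite target
    have h2e : (1 : ℝ) + 2 / ε = (1 + r) / r := by
      rw [hr]; field_simp; ring
    rw [h2e, div_pow]
    have hrd : (0 : ℝ) < r ^ (m + 1) := by positivity
    rw [← mul_le_mul_iff_left₀ hrd]
    calc (N.card : ℝ) * r ^ (m + 1) ≤ 2 * (((m : ℝ) + 1) * r * (1 + r) ^ m) := hc1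
      _ = 2 * ((m : ℝ) + 1) * ((1 + r) ^ m / r ^ m) * r ^ (m + 1) := by
          field_simp
          ring
  -- maximal separated set
  set Good : Finset (EuclideanSpace ℝ (Fin (m + 1))) → Prop := fun N =>
    (∀ x ∈ N, ‖x‖ = 1) ∧ (∀ x ∈ N, ∀ y ∈ N, x ≠ y → ε < dist x y) with hGood
  set s : Set ℕ := {n | ∃ N, Good N ∧ N.card = n} with hs
  have hsne : s.Nonempty := by
    refine ⟨1, {EuclideanSpace.single (0 : Fin (m + 1)) 1}, ⟨?_, ?_⟩, Finset.card_singleton _⟩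
    · intro x hx
      rw [Finset.mem_singleton] at hx
      rw [hx, EuclideanSpace.norm_single, norm_one]
    · intro x hx y hy hxy
      rw [Finset.mem_singleton] at hx hy
      exact absurd (hx.trans hy.symm) hxy
  have hsbdd : BddAbove s := by
    refine ⟨⌈2 * ((m : ℝ) + 1) * (1 + 2 / ε) ^ m⌉₊, fun n hn => ?_⟩
    obtain ⟨N, ⟨h1, h2⟩, rfl⟩ := hn
    have := hbound N h1 h2
    exact_mod_cast this.trans (Nat.le_ceil _)
  obtain ⟨N, hNgood, hNcard⟩ := Nat.sSup_mem hsne hsbdd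
  -- N is a net
  have hnet : ∀ x : EuclideanSpace ℝ (Fin (m + 1)), ‖x‖ = 1 → ∃ y ∈ N, dist x y ≤ ε := by
    intro x hx
    by_contra hcon
    push_neg at hcon
    have hxN : x ∉ N := by
      intro hxN
      have := hcon x hxN
      simp only [dist_self] at this
      linarith
    have hgood' : Good (insert x N) := by
      constructor
      · intro z hz
        rcases Finset.mem_insert.mp hz with h | h
        · rw [h]; exact hx
        · exact hNgood.1 z h
      · intro a ha b hb hab
        rcases Finset.mem_insert.mp ha with h | h <;>
          rcases Finset.mem_insert.mp hb with h' | h'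
        · exact absurd (h.trans h'.symm) hab
        · rw [h]; exact hcon b h'
        · rw [h', dist_comm]; exact hcon a h
        · exact hNgood.2 a h b h' hab
    have hmem : N.card + 1 ∈ s := ⟨insert x N, hgood', by
      rw [Finset.card_insert_of_notMem hxN]⟩
    have := le_csSup hsbdd hmem
    omega
  -- identification of the two norms
  have keyN : ∀ z : EuclideanSpace ℝ (Fin (m + 1)), euclNorm z = ‖z‖ := by
    intro z
    rw [EuclideanSpace.norm_eq, euclNorm]
    congr 1
    refine Finset.sum_congr rfl fun i _ => ?_
    rw [Real.norm_eq_abs, sq_abs]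
  refine ⟨N.image WithLp.ofLp, ⟨?_, ?_⟩, ?_⟩
  · intro x hx
    obtain ⟨x', hx', rfl⟩ := Finset.mem_image.mp hx
    rw [keyN x']
    exact hNgood.1 x' hx'
  · intro x hx
    rw [show x = (WithLp.toLp 2 x).ofLp from rfl, keyN] at hx
    obtain ⟨y, hy, hxy⟩ := hnet _ hx
    refine ⟨y.ofLp, Finset.mem_image_of_mem _ hy, ?_⟩
    rw [dist_eq_norm] at hxy
    exact (keyN (WithLp.toLp 2 x - y)).trans_le hxy
  · have hb := hbound N hNgood.1 hNgood.2
    have hcast : (((m + 1 : ℕ) : ℝ) - 1) = ((m : ℕ) : ℝ) := by push_cast; ring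
    rw [hcast, Real.rpow_natCast]
    push_cast
    exact le_trans (by exact_mod_cast Finset.card_image_le) hb
end

section
/- There exists an absolute constant c > 0 such that the following holds: if X₁,…,X_m are i.i.d. random vectors uniformly distributed on the unit sphere of ℝ^n, X_S ∈ ℝ^{n×m} is the matrix with columns X₁,…,X_m, and v ∈ ℝ^n, w ∈ ℝ^m are fixed unit vectors, then for every u ≥ 0, P( |v^t X_S w| ≥ u ) ≤ 2·exp(−c·n·u²). -/
open MeasureTheory ProbabilityTheory Real Matrix
open scoped ENNReal

/-- A measure on `Fin n → ℝ` is the uniform (normalized Haar, i.e. rotation invariant)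
distribution on the unit sphere if it is a probability measure supported on the unit
sphere which is invariant under every orthogonal transformation. -/
def IsUniformOnSphere {n : ℕ} (ν : Measure (Fin n → ℝ)) : Prop :=
  IsProbabilityMeasure ν ∧ ν {x | euclNorm x = 1} = 1 ∧
    ∀ Q : Matrix (Fin n) (Fin n) ℝ, Qᵀ * Q = 1 → ν.map Q.mulVec = ν

lemma euclNorm_eq_one_iff {k : Type*} [Fintype k] {v : k → ℝ} :
    euclNorm v = 1 ↔ ∑ i, v i ^ 2 = 1 := by
  unfold euclNorm
  constructor
  · intro h
    have h0 : (0:ℝ) ≤ ∑ i, v i ^ 2 := Finset.sum_nonneg fun i _ => sq_nonneg _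
    nlinarith [Real.sq_sqrt h0]
  · intro h; rw [h, Real.sqrt_one]

lemma measurable_mulVec {n : ℕ} (Q : Matrix (Fin n) (Fin n) ℝ) :
    Measurable (Q.mulVec) := by
  apply measurable_pi_lambda
  intro i
  simp only [Matrix.mulVec, dotProduct]
  exact Finset.measurable_sum _ fun j _ => (measurable_pi_apply j).const_mul _

lemma ae_sphere {n : ℕ} {ν : Measure (Fin n → ℝ)} (hν : IsUniformOnSphere ν) :
    ∀ᵐ x ∂ν, ∑ i, x i ^ 2 = 1 := by
  obtain ⟨hprob, hsupp, -⟩ := hν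
  have hmeas : MeasurableSet {x : Fin n → ℝ | euclNorm x = 1} := by
    have : Measurable (euclNorm : (Fin n → ℝ) → ℝ) := by
      apply Real.continuous_sqrt.measurable.comp
      exact Finset.measurable_sum _ fun i _ => (measurable_pi_apply i).pow_const 2
    exact this (measurableSet_singleton 1)
  have h0 : ν {x : Fin n → ℝ | euclNorm x = 1}ᶜ = 0 := by
    rw [measure_compl hmeas (measure_ne_top _ _), hsupp, measure_univ]; simp
  rw [MeasureTheory.ae_iff]
  refine measure_mono_null ?_ h0
  intro x hx hmem
  exact hx (euclNorm_eq_one_iff.1 hmem)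

lemma integrable_sphere {n : ℕ} {ν : Measure (Fin n → ℝ)} (hν : IsUniformOnSphere ν)
    {g : (Fin n → ℝ) → ℝ} (hg : Measurable g) {C : ℝ}
    (hC : ∀ x : Fin n → ℝ, ∑ i, x i ^ 2 = 1 → |g x| ≤ C) : Integrable g ν := by
  have : IsProbabilityMeasure ν := hν.1
  exact (integrable_const C).mono' hg.aestronglyMeasurable
    ((ae_sphere hν).mono fun x hx => by simpa [Real.norm_eq_abs] using hC x hx)

lemma integral_invariant {n : ℕ} {ν : Measure (Fin n → ℝ)} (hν : IsUniformOnSphere ν)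
    {Q : Matrix (Fin n) (Fin n) ℝ} (hQ : Qᵀ * Q = 1) {g : (Fin n → ℝ) → ℝ}
    (hg : Measurable g) : ∫ x, g (Q.mulVec x) ∂ν = ∫ x, g x ∂ν := by
  conv_rhs => rw [← hν.2.2 Q hQ]
  rw [integral_map (measurable_mulVec Q).aemeasurable hg.aestronglyMeasurable]

lemma signflip_orth {n : ℕ} (ε : Fin n → ℝ) (hε : ∀ i, ε i = 1 ∨ ε i = -1) :
    (Matrix.diagonal ε)ᵀ * Matrix.diagonal ε = 1 := by
  rw [Matrix.diagonal_transpose, Matrix.diagonal_mul_diagonal]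
  ext i j
  rcases hε i with h | h <;> by_cases hij : i = j <;>
    subst_vars <;> simp [Matrix.diagonal_apply, Matrix.one_apply, *] <;> simp_all

lemma householder {n : ℕ} (v a : Fin n → ℝ) (hv : ∑ i, v i ^ 2 = 1)
    (ha : ∑ i, a i ^ 2 = 1) :
    ∃ Q : Matrix (Fin n) (Fin n) ℝ, Qᵀ = Q ∧ Qᵀ * Q = 1 ∧ Q.mulVec v = a := by
  by_cases hva : v = a
  · exact ⟨1, by simp, by simp, by simp [hva]⟩
  set u : Fin n → ℝ := v - a with hu
  set c : ℝ := ∑ i, u i ^ 2 with hc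
  have hc_nonneg : (0:ℝ) ≤ c := Finset.sum_nonneg fun i _ => sq_nonneg _
  have hc_ne : c ≠ 0 := by
    intro h0
    apply hva
    funext i
    have hsum0 : ∑ i, u i ^ 2 = 0 := by rw [← hc, h0]
    have hui : u i ^ 2 = 0 :=
      (Finset.sum_eq_zero_iff_of_nonneg (fun i _ => sq_nonneg (u i))).1 hsum0 i (Finset.mem_univ i)
    have : u i = 0 := by
      have := sq_eq_zero_iff.1 hui
      exact this
    have h2 : v i - a i = 0 := this
    linarith
  set M : Matrix (Fin n) (Fin n) ℝ := Matrix.vecMulVec u u with hM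
  set Q : Matrix (Fin n) (Fin n) ℝ := 1 - (2 / c) • M with hQdef
  have hMsym : Mᵀ = M := by
    ext i j; simp [hM, Matrix.vecMulVec_apply, Matrix.transpose_apply, mul_comm]
  have hQsym : Qᵀ = Q := by
    rw [hQdef, Matrix.transpose_sub, Matrix.transpose_one, Matrix.transpose_smul, hMsym]
  have hMM : M * M = c • M := by
    ext i j
    simp only [hM, Matrix.mul_apply, Matrix.vecMulVec_apply, Matrix.smul_apply, smul_eq_mul]
    calc ∑ k, u i * u k * (u k * u j) = ∑ k, u k ^ 2 * (u i * u j) := by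
          apply Finset.sum_congr rfl; intro k _; ring
      _ = (∑ k, u k ^ 2) * (u i * u j) := by rw [← Finset.sum_mul]
      _ = c * (u i * u j) := by rw [← hc]
  have hQQ : Qᵀ * Q = 1 := by
    rw [hQsym, hQdef]
    have expand : ∀ N : Matrix (Fin n) (Fin n) ℝ, (1 - N) * (1 - N) = 1 - N - N + N * N := by
      intro N
      rw [sub_mul, one_mul, mul_sub, mul_one]
      abel
    have hNN : ((2/c) • M) * ((2/c) • M) = ((2/c) * ((2/c) * c)) • M := by
      rw [Matrix.smul_mul, Matrix.mul_smul, hMM, smul_smul, smul_smul, mul_assoc]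
    have h4 : (2/c) * ((2/c) * c) = 2/c + 2/c := by field_simp; ring
    rw [expand, hNN, h4, add_smul]
    abel
  refine ⟨Q, hQsym, hQQ, ?_⟩
  have hMv : ∀ i, M.mulVec v i = (∑ j, u j * v j) * u i := by
    intro i
    simp only [hM, Matrix.mulVec, dotProduct, Matrix.vecMulVec_apply]
    calc ∑ j, u i * u j * v j = ∑ j, (u j * v j) * u i := by
          apply Finset.sum_congr rfl; intro j _; ring
      _ = (∑ j, u j * v j) * u i := by rw [← Finset.sum_mul]
  set d : ℝ := ∑ j, a j * v j with hd
  have hsum1 : ∑ j, u j * v j = 1 - d := by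
    have h1 : ∀ j, u j * v j = v j ^ 2 - a j * v j := by
      intro j; simp only [hu, Pi.sub_apply]; ring
    rw [Finset.sum_congr rfl fun j _ => h1 j, Finset.sum_sub_distrib, hv, ← hd]
  have hcval : c = 2 - 2 * d := by
    have h1 : ∀ j, u j ^ 2 = v j ^ 2 + a j ^ 2 - 2 * (a j * v j) := by
      intro j; simp only [hu, Pi.sub_apply]; ring
    rw [hc, Finset.sum_congr rfl fun j _ => h1 j, Finset.sum_sub_distrib,
      Finset.sum_add_distrib, hv, ha, ← Finset.mul_sum, ← hd]
    ring
  have hkey : (2 / c) * (1 - d) = 1 := by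
    have h2d : (2:ℝ) - 2 * d ≠ 0 := by rw [← hcval]; exact hc_ne
    rw [hcval, div_mul_eq_mul_div, div_eq_one_iff_eq h2d]
    ring
  funext i
  have h1 : Q.mulVec v i = v i - (2/c) * ((∑ j, u j * v j) * u i) := by
    simp only [hQdef, Matrix.sub_mulVec, Matrix.one_mulVec, Pi.sub_apply,
      Matrix.smul_mulVec, Pi.smul_apply, smul_eq_mul, hMv i]
  rw [h1, hsum1]
  have : (2/c) * ((1 - d) * u i) = u i := by
    rw [← mul_assoc, hkey, one_mul]
  rw [this]
  simp [hu]

lemma sphere_mgf {n : ℕ} (hn : 0 < n) {ν : Measure (Fin n → ℝ)} (hν : IsUniformOnSphere ν)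
    (v : Fin n → ℝ) (hv : ∑ i, v i ^ 2 = 1) (t : ℝ) :
    Integrable (fun x => Real.exp (t * ∑ i, v i * x i)) ν ∧
      ∫ x, Real.exp (t * ∑ i, v i * x i) ∂ν ≤ Real.exp (t ^ 2 / (2 * n)) := by
  haveI : IsProbabilityMeasure ν := hν.1
  have hn0 : (0:ℝ) < (n:ℝ) := by exact_mod_cast hn
  have hsqrt : Real.sqrt n ≠ 0 := by positivity
  have hsq : (Real.sqrt n)⁻¹ ^ 2 = (n:ℝ)⁻¹ := by
    rw [inv_pow, Real.sq_sqrt hn0.le]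
  -- measurability of the main integrand
  have hmeas1 : Measurable fun x : Fin n → ℝ => Real.exp (t * ∑ i, v i * x i) :=
    Real.measurable_exp.comp
      ((Finset.measurable_sum _ fun i _ => by fun_prop).const_mul t)
  have hxile : ∀ (x : Fin n → ℝ), (∑ i, x i ^ 2 = 1) → ∀ i, x i ^ 2 ≤ 1 := by
    intro x hx i
    rw [← hx]
    exact Finset.single_le_sum (f := fun j => x j ^ 2) (fun j _ => sq_nonneg _) (Finset.mem_univ i)
  have habs : ∀ y : ℝ, y ^ 2 ≤ 1 → |y| ≤ 1 := by
    intro y hy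
    rw [← Real.sqrt_sq_eq_abs]
    calc Real.sqrt (y ^ 2) ≤ Real.sqrt 1 := Real.sqrt_le_sqrt hy
      _ = 1 := Real.sqrt_one
  -- integrability of the main integrand
  have hCS : ∀ x : Fin n → ℝ, ∑ i, x i ^ 2 = 1 → |∑ i, v i * x i| ≤ 1 := by
    intro x hx
    apply habs
    calc (∑ i, v i * x i) ^ 2 ≤ (∑ i, v i ^ 2) * ∑ i, x i ^ 2 :=
          Finset.sum_mul_sq_le_sq_mul_sq _ _ _
      _ = 1 := by rw [hv, hx, one_mul]
  have hint_main : Integrable (fun x => Real.exp (t * ∑ i, v i * x i)) ν := by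
    apply integrable_sphere hν hmeas1 (C := Real.exp |t|)
    intro x hx
    rw [abs_of_nonneg (Real.exp_pos _).le]
    apply Real.exp_le_exp.2
    calc t * ∑ i, v i * x i ≤ |t * ∑ i, v i * x i| := le_abs_self _
      _ = |t| * |∑ i, v i * x i| := abs_mul _ _
      _ ≤ |t| * 1 := by
          apply mul_le_mul_of_nonneg_left (hCS x hx) (abs_nonneg t)
      _ = |t| := mul_one _
  refine ⟨hint_main, ?_⟩
  -- Householder rotation to the constant vector
  set a : Fin n → ℝ := fun _ => (Real.sqrt n)⁻¹ with hadef
  have ha : ∑ i, a i ^ 2 = 1 := by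
    simp only [hadef, Finset.sum_const, Finset.card_univ, Fintype.card_fin, nsmul_eq_mul, hsq]
    field_simp
  set s : ℝ := t * (Real.sqrt n)⁻¹ with hs
  obtain ⟨Q, hQsym, hQorth, hQv⟩ := householder v a hv ha
  have hdot : ∀ x : Fin n → ℝ, t * ∑ i, v i * Q.mulVec x i = s * ∑ i, x i := by
    intro x
    have h1 : ∑ i, v i * Q.mulVec x i = a ⬝ᵥ x := by
      have h2 : ∑ i, v i * Q.mulVec x i = v ⬝ᵥ (Q *ᵥ x) := by
        simp [dotProduct]
      rw [h2, Matrix.dotProduct_mulVec, ← Matrix.mulVec_transpose, hQsym, hQv]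
    rw [h1]
    simp only [dotProduct, hadef]
    rw [← Finset.mul_sum, hs]
    ring
  have hstep0 : ∫ x, Real.exp (t * ∑ i, v i * x i) ∂ν = ∫ x, Real.exp (s * ∑ i, x i) ∂ν := by
    rw [← integral_invariant hν hQorth hmeas1]
    exact integral_congr_ae (Filter.Eventually.of_forall fun x => by
      show Real.exp (t * ∑ i, v i * Q.mulVec x i) = Real.exp (s * ∑ i, x i)
      rw [hdot x])
  -- the interpolating family
  set F : ℕ → (Fin n → ℝ) → ℝ := fun k x =>
    ∏ i : Fin n, if (i : ℕ) < k then Real.cosh (s * x i) else Real.exp (s * x i) with hFdef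
  have hFmeas : ∀ k, Measurable (F k) := by
    intro k
    apply Finset.measurable_prod
    intro i _
    by_cases h : (i:ℕ) < k <;> simp only [h, if_true, if_false]
    · exact Real.continuous_cosh.measurable.comp ((by fun_prop : Measurable fun x : Fin n → ℝ => s * x i))
    · exact Real.measurable_exp.comp ((by fun_prop : Measurable fun x : Fin n → ℝ => s * x i))
  set M : ℝ := Real.exp (|s| + s ^ 2 / 2) with hMdef
  have hM1 : 1 ≤ M := Real.one_le_exp (by positivity)
  have hexp_le : ∀ y : ℝ, y ^ 2 ≤ 1 → Real.exp (s * y) ≤ M := by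
    intro y hy
    apply Real.exp_le_exp.2
    have h1 : s * y ≤ |s| := by
      calc s * y ≤ |s * y| := le_abs_self _
        _ = |s| * |y| := abs_mul _ _
        _ ≤ |s| * 1 := mul_le_mul_of_nonneg_left (habs y hy) (abs_nonneg s)
        _ = |s| := mul_one _
    nlinarith [sq_nonneg s]
  have hexpneg_le : ∀ y : ℝ, y ^ 2 ≤ 1 → Real.exp (-(s * y)) ≤ M := by
    intro y hy
    apply Real.exp_le_exp.2
    have h1 : -(s * y) ≤ |s| := by
      calc -(s * y) ≤ |s * y| := neg_le_abs _
        _ = |s| * |y| := abs_mul _ _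
        _ ≤ |s| * 1 := mul_le_mul_of_nonneg_left (habs y hy) (abs_nonneg s)
        _ = |s| := mul_one _
    nlinarith [sq_nonneg s]
  have hcosh_le : ∀ y : ℝ, y ^ 2 ≤ 1 → Real.cosh (s * y) ≤ M := by
    intro y hy
    calc Real.cosh (s * y) ≤ Real.exp ((s * y) ^ 2 / 2) := Real.cosh_le_exp_half_sq _
      _ ≤ M := by
          apply Real.exp_le_exp.2
          have : (s * y) ^ 2 ≤ s ^ 2 := by nlinarith [sq_nonneg s, sq_nonneg y]
          have habs0 : (0:ℝ) ≤ |s| := abs_nonneg s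
          nlinarith
  have hfactor : ∀ (b : Prop) (inst : Decidable b) (y : ℝ), y ^ 2 ≤ 1 →
      0 ≤ (if b then Real.cosh (s * y) else Real.exp (s * y)) ∧
        (if b then Real.cosh (s * y) else Real.exp (s * y)) ≤ M := by
    intro b inst y hy
    by_cases h : b <;> simp only [h, if_true, if_false]
    · exact ⟨(Real.cosh_pos _).le, hcosh_le y hy⟩
    · exact ⟨(Real.exp_pos _).le, hexp_le y hy⟩
  have hFbound : ∀ k (x : Fin n → ℝ), ∑ i, x i ^ 2 = 1 → |F k x| ≤ M ^ n := by
    intro k x hx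
    have h0 : 0 ≤ F k x :=
      Finset.prod_nonneg fun i _ => (hfactor _ _ _ (hxile x hx i)).1
    rw [abs_of_nonneg h0]
    calc F k x ≤ ∏ _i : Fin n, M :=
          Finset.prod_le_prod (fun i _ => (hfactor _ _ _ (hxile x hx i)).1)
            (fun i _ => (hfactor _ _ _ (hxile x hx i)).2)
      _ = M ^ n := by simp
  -- the flip step
  have hstep : ∀ k, k < n → ∫ x, F (k+1) x ∂ν = ∫ x, F k x ∂ν := by
    intro k hk
    set κ : Fin n := ⟨k, hk⟩ with hκ
    set A : (Fin n → ℝ) → ℝ := fun x =>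
      ∏ i ∈ Finset.univ.erase κ,
        if (i : ℕ) < k then Real.cosh (s * x i) else Real.exp (s * x i) with hAdef
    have hAmeas : Measurable A := by
      apply Finset.measurable_prod
      intro i _
      by_cases h : (i:ℕ) < k <;> simp only [h, if_true, if_false]
      · exact Real.continuous_cosh.measurable.comp ((by fun_prop : Measurable fun x : Fin n → ℝ => s * x i))
      · exact Real.measurable_exp.comp ((by fun_prop : Measurable fun x : Fin n → ℝ => s * x i))
    have hAsame : ∀ (x x' : Fin n → ℝ), (∀ i, i ≠ κ → x i = x' i) → A x = A x' := by
      intro x x' h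
      apply Finset.prod_congr rfl
      intro i hi
      rw [h i (Finset.ne_of_mem_erase hi)]
    have hAbound : ∀ x : Fin n → ℝ, ∑ i, x i ^ 2 = 1 → 0 ≤ A x ∧ A x ≤ M ^ n := by
      intro x hx
      constructor
      · exact Finset.prod_nonneg fun i _ => (hfactor _ _ _ (hxile x hx i)).1
      · calc A x ≤ ∏ _i ∈ Finset.univ.erase κ, M :=
              Finset.prod_le_prod (fun i _ => (hfactor _ _ _ (hxile x hx i)).1)
                (fun i _ => (hfactor _ _ _ (hxile x hx i)).2)
          _ = M ^ (Finset.univ.erase κ).card := by rw [Finset.prod_const]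
          _ ≤ M ^ n := by
              apply pow_le_pow_right₀ hM1
              calc (Finset.univ.erase κ).card ≤ Finset.univ.card :=
                    Finset.card_le_card (Finset.erase_subset _ _)
                _ = n := by simp
    have hFk : ∀ x, F k x = A x * Real.exp (s * x κ) := by
      intro x
      have h1 : F k x = (∏ i ∈ Finset.univ.erase κ,
          if (i : ℕ) < k then Real.cosh (s * x i) else Real.exp (s * x i)) *
          (if (κ : ℕ) < k then Real.cosh (s * x κ) else Real.exp (s * x κ)) :=
        (Finset.prod_erase_mul _ _ (Finset.mem_univ κ)).symm
      rw [h1, hAdef]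
      simp [hκ]
    have hFk1 : ∀ x, F (k+1) x = A x * Real.cosh (s * x κ) := by
      intro x
      have h1 : F (k+1) x = (∏ i ∈ Finset.univ.erase κ,
          if (i : ℕ) < k + 1 then Real.cosh (s * x i) else Real.exp (s * x i)) *
          (if (κ : ℕ) < k + 1 then Real.cosh (s * x κ) else Real.exp (s * x κ)) :=
        (Finset.prod_erase_mul _ _ (Finset.mem_univ κ)).symm
      rw [h1]
      have h2 : (∏ i ∈ Finset.univ.erase κ,
          if (i : ℕ) < k + 1 then Real.cosh (s * x i) else Real.exp (s * x i)) = A x := by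
        apply Finset.prod_congr rfl
        intro i hi
        have hik : (i : ℕ) ≠ k := by
          intro h
          exact Finset.ne_of_mem_erase hi (Fin.ext h)
        by_cases h3 : (i:ℕ) < k
        · simp [h3, Nat.lt_succ_of_lt h3]
        · have h4 : ¬ (i:ℕ) < k + 1 := by omega
          simp [h3, h4]
      rw [h2]
      simp [hκ]
    -- sign flip matrix
    set ε : Fin n → ℝ := fun i => if i = κ then -1 else 1 with hε
    have hεpm : ∀ i, ε i = 1 ∨ ε i = -1 := by
      intro i; by_cases h : i = κ <;> simp [hε, h]
    have hQflip := signflip_orth ε hεpm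
    have hmulv : ∀ x : Fin n → ℝ, (Matrix.diagonal ε).mulVec x = fun i => ε i * x i := by
      intro x; funext i; rw [Matrix.mulVec_diagonal]
    have hg1meas : Measurable fun x : Fin n → ℝ => A x * Real.exp (s * x κ) :=
      hAmeas.mul (Real.measurable_exp.comp ((by fun_prop : Measurable fun x : Fin n → ℝ => s * x κ)))
    have hg2meas : Measurable fun x : Fin n → ℝ => A x * Real.exp (-(s * x κ)) :=
      hAmeas.mul (Real.measurable_exp.comp (((by fun_prop : Measurable fun x : Fin n → ℝ => s * x κ)).neg))
    have hg3meas : Measurable fun x : Fin n → ℝ => A x * Real.cosh (s * x κ) :=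
      hAmeas.mul (Real.continuous_cosh.measurable.comp ((by fun_prop : Measurable fun x : Fin n → ℝ => s * x κ)))
    have hint1 : Integrable (fun x => A x * Real.exp (s * x κ)) ν := by
      apply integrable_sphere hν hg1meas (C := M ^ n * M)
      intro x hx
      rw [abs_mul, abs_of_nonneg (hAbound x hx).1, abs_of_nonneg (Real.exp_pos _).le]
      exact mul_le_mul (hAbound x hx).2 (hexp_le _ (hxile x hx κ)) (Real.exp_pos _).le
        (by positivity)
    have hint2 : Integrable (fun x => A x * Real.exp (-(s * x κ))) ν := by
      apply integrable_sphere hν hg2meas (C := M ^ n * M)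
      intro x hx
      rw [abs_mul, abs_of_nonneg (hAbound x hx).1, abs_of_nonneg (Real.exp_pos _).le]
      exact mul_le_mul (hAbound x hx).2 (hexpneg_le _ (hxile x hx κ)) (Real.exp_pos _).le
        (by positivity)
    have hflip : ∫ x, A x * Real.exp (s * x κ) ∂ν = ∫ x, A x * Real.exp (-(s * x κ)) ∂ν := by
      have hinv := integral_invariant hν hQflip hg1meas
      calc ∫ x, A x * Real.exp (s * x κ) ∂ν
          = ∫ x, A ((Matrix.diagonal ε).mulVec x) *
              Real.exp (s * ((Matrix.diagonal ε).mulVec x) κ) ∂ν := hinv.symm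
        _ = ∫ x, A x * Real.exp (-(s * x κ)) ∂ν := by
            apply integral_congr_ae
            apply Filter.Eventually.of_forall
            intro x
            show A ((Matrix.diagonal ε).mulVec x) *
                Real.exp (s * ((Matrix.diagonal ε).mulVec x) κ) =
              A x * Real.exp (-(s * x κ))
            rw [hmulv x]
            have h1 : A (fun i => ε i * x i) = A x := by
              apply hAsame
              intro i hi
              simp [hε, hi]
            have h2 : s * ((fun i => ε i * x i) κ) = -(s * x κ) := by
              simp [hε]
            rw [h1, h2]
    calc ∫ x, F (k+1) x ∂ν = ∫ x, A x * Real.cosh (s * x κ) ∂ν := by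
          apply integral_congr_ae (Filter.Eventually.of_forall fun x => hFk1 x)
      _ = ∫ x, (A x * Real.exp (s * x κ) + A x * Real.exp (-(s * x κ))) / 2 ∂ν := by
          apply integral_congr_ae
          apply Filter.Eventually.of_forall
          intro x
          show A x * Real.cosh (s * x κ) =
            (A x * Real.exp (s * x κ) + A x * Real.exp (-(s * x κ))) / 2
          rw [Real.cosh_eq]
          ring
      _ = ((∫ x, A x * Real.exp (s * x κ) ∂ν) + ∫ x, A x * Real.exp (-(s * x κ)) ∂ν) / 2 := by
          rw [integral_div, integral_add hint1 hint2]
      _ = ∫ x, A x * Real.exp (s * x κ) ∂ν := by rw [← hflip]; ring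
      _ = ∫ x, F k x ∂ν :=
          (integral_congr_ae (Filter.Eventually.of_forall fun x => hFk x)).symm
  have hchain : ∀ k, k ≤ n → ∫ x, F k x ∂ν = ∫ x, F 0 x ∂ν := by
    intro k
    induction k with
    | zero => intro _; rfl
    | succ k ih =>
        intro hk
        rw [hstep k (by omega)]
        exact ih (by omega)
  have hF0 : ∀ x, F 0 x = Real.exp (s * ∑ i, x i) := by
    intro x
    simp only [hFdef, Nat.not_lt_zero, if_false]
    rw [← Real.exp_sum, Finset.mul_sum]
  have hFn : ∀ x, F n x = ∏ i, Real.cosh (s * x i) := by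
    intro x
    exact Finset.prod_congr rfl fun i _ => by simp [i.isLt]
  have hlast : ∫ x, F n x ∂ν ≤ Real.exp (s ^ 2 / 2) := by
    have hint : Integrable (F n) ν := integrable_sphere hν (hFmeas n) (hFbound n)
    calc ∫ x, F n x ∂ν ≤ ∫ _x, Real.exp (s ^ 2 / 2) ∂ν := by
          apply integral_mono_ae hint (integrable_const _)
          filter_upwards [ae_sphere hν] with x hx
          rw [hFn]
          calc ∏ i, Real.cosh (s * x i) ≤ ∏ i, Real.exp ((s * x i) ^ 2 / 2) :=
                Finset.prod_le_prod (fun i _ => (Real.cosh_pos _).le)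
                  (fun i _ => Real.cosh_le_exp_half_sq _)
            _ = Real.exp (∑ i, (s * x i) ^ 2 / 2) := (Real.exp_sum _ _).symm
            _ = Real.exp (s ^ 2 / 2) := by
                congr 1
                have h1 : ∀ i, (s * x i) ^ 2 / 2 = s ^ 2 / 2 * x i ^ 2 := by
                  intro i; ring
                rw [Finset.sum_congr rfl fun i _ => h1 i, ← Finset.mul_sum, hx, mul_one]
      _ = Real.exp (s ^ 2 / 2) := by simp
  have hs2 : s ^ 2 / 2 = t ^ 2 / (2 * n) := by
    rw [hs, mul_pow, hsq, ← div_eq_mul_inv, div_div, mul_comm (n:ℝ) 2]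
  calc ∫ x, Real.exp (t * ∑ i, v i * x i) ∂ν = ∫ x, F 0 x ∂ν := by
        rw [hstep0]
        exact integral_congr_ae (Filter.Eventually.of_forall fun x => (hF0 x).symm)
    _ = ∫ x, F n x ∂ν := (hchain n le_rfl).symm
    _ ≤ Real.exp (s ^ 2 / 2) := hlast
    _ = Real.exp (t ^ 2 / (2 * n)) := by rw [hs2]

lemma iIndepFun_ae_eq {ι Ω : Type*} {mΩ : MeasurableSpace Ω} {μ : Measure Ω}
    {β : ι → Type*} {m : ∀ i, MeasurableSpace (β i)} {f g : ∀ i, Ω → β i}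
    (hf : iIndepFun (m := m) f μ) (hfg : ∀ i, f i =ᵐ[μ] g i) : iIndepFun (m := m) g μ := by
  rw [ProbabilityTheory.iIndepFun_iff_measure_inter_preimage_eq_mul] at hf ⊢
  intro S sets hsets
  have hpre : ∀ i, (g i ⁻¹' sets i : Set Ω) =ᵐ[μ] (f i ⁻¹' sets i : Set Ω) := by
    intro i
    apply Filter.eventuallyEq_set.2
    filter_upwards [hfg i] with ω hω
    simp [Set.mem_preimage, hω]
  have hInter : (⋂ i ∈ S, g i ⁻¹' sets i : Set Ω) =ᵐ[μ] (⋂ i ∈ S, f i ⁻¹' sets i : Set Ω) := by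
    apply Filter.eventuallyEq_set.2
    have hall : ∀ᵐ ω ∂μ, ∀ i ∈ S, f i ω = g i ω :=
      (MeasureTheory.ae_ball_iff S.countable_toSet).2 fun i _ => hfg i
    filter_upwards [hall] with ω hω
    simp only [Set.mem_iInter, Set.mem_preimage]
    constructor
    · intro h i hi; rw [hω i hi]; exact h i hi
    · intro h i hi; rw [← hω i hi]; exact h i hi
  rw [measure_congr hInter, hf S hsets]
  exact Finset.prod_congr rfl fun i _ => (measure_congr (hpre i)).symm

/-- There is an absolute constant `c > 0` such that: if `X₁,…,X_m` are i.i.d. random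
vectors uniformly distributed on the unit sphere of `ℝ^n`, `X_S ∈ ℝ^{n×m}` is the matrix
with columns `X₁,…,X_m`, and `v ∈ ℝ^n`, `w ∈ ℝ^m` are fixed unit vectors, then for every
`u ≥ 0`, `P(|vᵀ X_S w| ≥ u) ≤ 2·exp(-c·n·u²)`.  Here
`vᵀ X_S w = ∑_j (∑_i v i · X_j(i)) · w j`. -/
theorem sphere_bilinear_subgaussian :
    ∃ c : ℝ, 0 < c ∧
      ∀ (Ω : Type) (_ : MeasurableSpace Ω) (μ : Measure Ω), IsProbabilityMeasure μ →
        ∀ (n m : ℕ) (X : Fin m → Ω → (Fin n → ℝ)),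
          iIndepFun X μ →
          (∀ j, IsUniformOnSphere (μ.map (X j))) →
          ∀ v : Fin n → ℝ, euclNorm v = 1 →
            ∀ w : Fin m → ℝ, euclNorm w = 1 →
              ∀ u : ℝ, 0 ≤ u →
                (μ {ω | u ≤ |∑ j, (∑ i, v i * X j ω i) * w j|}).toReal ≤
                  2 * Real.exp (-c * n * u ^ 2) := by
  refine ⟨1/2, by norm_num, ?_⟩
  intro Ω mΩ μ hμ n m X hindep hunif v hv w hw u hu
  haveI := hμ
  -- m must be positive
  rcases Nat.eq_zero_or_pos m with hm | hm
  · exfalso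
    subst hm
    simp [euclNorm] at hw
  -- n must be positive
  rcases Nat.eq_zero_or_pos n with hn | hn
  · exfalso
    subst hn
    obtain ⟨j⟩ := Fin.pos_iff_nonempty.1 hm
    obtain ⟨hp, hs, -⟩ := hunif j
    have hempty : ({x : Fin 0 → ℝ | euclNorm x = 1}) = ∅ := by
      ext x; simp [euclNorm]
    rw [hempty] at hs
    simp at hs
  have hn0 : (0:ℝ) < (n:ℝ) := by exact_mod_cast hn
  have hv2 : ∑ i, v i ^ 2 = 1 := euclNorm_eq_one_iff.1 hv
  have hw2 : ∑ j, w j ^ 2 = 1 := euclNorm_eq_one_iff.1 hw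
  -- a.e. measurable versions
  have hAE : ∀ j, AEMeasurable (X j) μ := by
    intro j
    by_contra h
    have h0 : μ.map (X j) = 0 := Measure.map_of_not_aemeasurable h
    have hp := (hunif j).1
    rw [h0] at hp
    haveI := hp
    exact (IsProbabilityMeasure.ne_zero (0 : Measure (Fin n → ℝ))) rfl
  set X' : Fin m → Ω → (Fin n → ℝ) := fun j => (hAE j).mk (X j) with hX'def
  have hmeas' : ∀ j, Measurable (X' j) := fun j => (hAE j).measurable_mk
  have heq : ∀ j, X j =ᵐ[μ] X' j := fun j => (hAE j).ae_eq_mk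
  have hmap' : ∀ j, μ.map (X' j) = μ.map (X j) := fun j => (Measure.map_congr (heq j)).symm
  have hX'indep := iIndepFun_ae_eq hindep heq
  -- the scalar random variables
  set g : Fin m → (Fin n → ℝ) → ℝ := fun j x => (∑ i, v i * x i) * w j with hgdef
  have hgmeas : ∀ j, Measurable (g j) := fun j =>
    (Finset.measurable_sum _ fun i _ => (by fun_prop : Measurable fun x : Fin n → ℝ => (v i) * x i)).mul_const (w j)
  set Y : Fin m → Ω → ℝ := fun j => g j ∘ X' j with hYdef
  have hYmeas : ∀ j, Measurable (Y j) := fun j => (hgmeas j).comp (hmeas' j)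
  have hYindep : iIndepFun Y μ :=
    hX'indep.comp g hgmeas
  -- per-coordinate mgf bound
  have hmgf : ∀ (τ : ℝ) (j : Fin m), Integrable (fun ω => Real.exp (τ * Y j ω)) μ ∧
      mgf (Y j) μ τ ≤ Real.exp (τ ^ 2 * w j ^ 2 / (2 * n)) := by
    intro τ j
    have hν : IsUniformOnSphere (μ.map (X' j)) := by
      rw [hmap' j]; exact hunif j
    have hkey := sphere_mgf hn hν v hv2 (τ * w j)
    have hmeasg : Measurable fun x : Fin n → ℝ => Real.exp ((τ * w j) * ∑ i, v i * x i) :=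
      Real.measurable_exp.comp
        ((Finset.measurable_sum _ fun i _ => (by fun_prop : Measurable fun x : Fin n → ℝ => (v i) * x i)).const_mul _)
    have hcomp : ∀ ω, Real.exp ((τ * w j) * ∑ i, v i * X' j ω i) = Real.exp (τ * Y j ω) := by
      intro ω
      congr 1
      show (τ * w j) * ∑ i, v i * X' j ω i = τ * ((∑ i, v i * X' j ω i) * w j)
      ring
    have hintμ : Integrable (fun ω => Real.exp (τ * Y j ω)) μ := by
      have h1 := (integrable_map_measure hmeasg.aestronglyMeasurable
        (hmeas' j).aemeasurable).1 hkey.1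
      have h2 : (fun x : Fin n → ℝ => Real.exp ((τ * w j) * ∑ i, v i * x i)) ∘ (X' j)
          = fun ω => Real.exp (τ * Y j ω) := by
        funext ω
        exact hcomp ω
      rwa [h2] at h1
    refine ⟨hintμ, ?_⟩
    have h3 : mgf (Y j) μ τ = ∫ x, Real.exp ((τ * w j) * ∑ i, v i * x i) ∂(μ.map (X' j)) := by
      rw [mgf, integral_map (hmeas' j).aemeasurable hmeasg.aestronglyMeasurable]
      exact integral_congr_ae (Filter.Eventually.of_forall fun ω => (hcomp ω).symm)
    rw [h3]
    calc ∫ x, Real.exp ((τ * w j) * ∑ i, v i * x i) ∂(μ.map (X' j))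
        ≤ Real.exp ((τ * w j) ^ 2 / (2 * n)) := hkey.2
      _ = Real.exp (τ ^ 2 * w j ^ 2 / (2 * n)) := by rw [mul_pow]
  -- mgf of the sum
  have hSint : ∀ τ : ℝ, Integrable (fun ω => Real.exp (τ * (∑ j, Y j) ω)) μ := fun τ =>
    hYindep.integrable_exp_mul_sum hYmeas (fun j _ => (hmgf τ j).1)
  have hSmgf : ∀ τ : ℝ, mgf (∑ j, Y j) μ τ ≤ Real.exp (τ ^ 2 / (2 * n)) := by
    intro τ
    rw [hYindep.mgf_sum hYmeas Finset.univ]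
    calc ∏ j, mgf (Y j) μ τ ≤ ∏ j, Real.exp (τ ^ 2 * w j ^ 2 / (2 * n)) :=
          Finset.prod_le_prod (fun j _ => mgf_nonneg) (fun j _ => (hmgf τ j).2)
      _ = Real.exp (∑ j, τ ^ 2 * w j ^ 2 / (2 * n)) := (Real.exp_sum _ _).symm
      _ = Real.exp (τ ^ 2 / (2 * n)) := by
          congr 1
          have h1 : ∀ j : Fin m, τ ^ 2 * w j ^ 2 / (2 * n) = τ ^ 2 / (2 * n) * w j ^ 2 := by
            intro j; ring
          rw [Finset.sum_congr rfl fun j _ => h1 j, ← Finset.mul_sum, hw2, mul_one]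
  -- Chernoff, upper tail
  have hexp_eq : Real.exp (-((n:ℝ) * u) * u) * Real.exp (((n:ℝ) * u) ^ 2 / (2 * n)) =
      Real.exp (-(1/2:ℝ) * n * u ^ 2) := by
    rw [← Real.exp_add]
    congr 1
    field_simp
    ring
  have hup : (μ {ω | u ≤ (∑ j, Y j) ω}).toReal ≤ Real.exp (-(1/2:ℝ) * n * u ^ 2) := by
    have h1 := measure_ge_le_exp_mul_mgf (μ := μ) (X := ∑ j, Y j) u
      (by positivity : (0:ℝ) ≤ (n:ℝ) * u) (hSint _)
    calc (μ {ω | u ≤ (∑ j, Y j) ω}).toReal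
        ≤ Real.exp (-((n:ℝ) * u) * u) * mgf (∑ j, Y j) μ ((n:ℝ) * u) := h1
      _ ≤ Real.exp (-((n:ℝ) * u) * u) * Real.exp (((n:ℝ) * u) ^ 2 / (2 * n)) :=
          mul_le_mul_of_nonneg_left (hSmgf _) (Real.exp_pos _).le
      _ = Real.exp (-(1/2:ℝ) * n * u ^ 2) := hexp_eq
  have hdown : (μ {ω | (∑ j, Y j) ω ≤ -u}).toReal ≤ Real.exp (-(1/2:ℝ) * n * u ^ 2) := by
    have h1 := measure_le_le_exp_mul_mgf (μ := μ) (X := ∑ j, Y j) (-u)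
      (neg_nonpos.2 (by positivity) : -((n:ℝ) * u) ≤ 0) (hSint (-((n:ℝ) * u)))
    calc (μ {ω | (∑ j, Y j) ω ≤ -u}).toReal
        ≤ Real.exp (-(-((n:ℝ) * u)) * (-u)) * mgf (∑ j, Y j) μ (-((n:ℝ) * u)) := h1
      _ ≤ Real.exp (-(-((n:ℝ) * u)) * (-u)) * Real.exp ((-((n:ℝ) * u)) ^ 2 / (2 * n)) :=
          mul_le_mul_of_nonneg_left (hSmgf _) (Real.exp_pos _).le
      _ = Real.exp (-(1/2:ℝ) * n * u ^ 2) := by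
          rw [← Real.exp_add]
          congr 1
          field_simp
          ring
  -- union bound
  have hsub : {ω | u ≤ |(∑ j, Y j) ω|} ⊆
      {ω | u ≤ (∑ j, Y j) ω} ∪ {ω | (∑ j, Y j) ω ≤ -u} := by
    intro ω hω
    simp only [Set.mem_setOf_eq, Set.mem_union] at hω ⊢
    rcases le_abs.1 hω with h | h
    · exact Or.inl h
    · exact Or.inr (by linarith)
  have hmeasure : (μ {ω | u ≤ |(∑ j, Y j) ω|}).toReal ≤
      2 * Real.exp (-(1/2:ℝ) * n * u ^ 2) := by
    have h1 : μ {ω | u ≤ |(∑ j, Y j) ω|} ≤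
        μ {ω | u ≤ (∑ j, Y j) ω} + μ {ω | (∑ j, Y j) ω ≤ -u} :=
      (measure_mono hsub).trans (measure_union_le _ _)
    calc (μ {ω | u ≤ |(∑ j, Y j) ω|}).toReal
        ≤ ((μ {ω | u ≤ (∑ j, Y j) ω}) + μ {ω | (∑ j, Y j) ω ≤ -u}).toReal :=
          ENNReal.toReal_mono
            (ENNReal.add_ne_top.2 ⟨measure_ne_top _ _, measure_ne_top _ _⟩) h1
      _ = (μ {ω | u ≤ (∑ j, Y j) ω}).toReal + (μ {ω | (∑ j, Y j) ω ≤ -u}).toReal :=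
          ENNReal.toReal_add (measure_ne_top _ _) (measure_ne_top _ _)
      _ ≤ Real.exp (-(1/2:ℝ) * n * u ^ 2) + Real.exp (-(1/2:ℝ) * n * u ^ 2) :=
          add_le_add hup hdown
      _ = 2 * Real.exp (-(1/2:ℝ) * n * u ^ 2) := by ring
  -- identify the original set with the Y-version
  have hae_sets : μ {ω | u ≤ |∑ j, (∑ i, v i * X j ω i) * w j|}
      = μ {ω | u ≤ |(∑ j, Y j) ω|} := by
    apply measure_congr
    apply Filter.eventuallyEq_set.2
    have hall : ∀ᵐ ω ∂μ, ∀ j, X j ω = X' j ω := MeasureTheory.ae_all_iff.2 heq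
    filter_upwards [hall] with ω hω
    simp only [Set.mem_setOf_eq, Finset.sum_apply]
    have h1 : ∑ j, (∑ i, v i * X j ω i) * w j = ∑ j, Y j ω := by
      apply Finset.sum_congr rfl
      intro j _
      rw [hω j]
      rfl
    rw [h1]
  rw [hae_sets]
  exact hmeasure
end
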